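/- Let Γ be a finite abelian group with dual group Γ̂ = Hom(Γ, ℂ×) (the finite set of group homomorphisms Γ → ℂ×), let I be a type, let w : I → ℂ be summable, and let λ : I → Γ̂. Define Z : Γ → ℂ by Z(u) = ∑'_{μ ∈ I} w(μ)·λ(μ)(u⁻¹), and for θ ∈ Γ̂ set S_θ = ∑'_{μ ∈ I, λ(μ) = θ} w(μ). For f : Γ → ℂ define its Fourier coefficients by f̂(θ) = (1/|Γ|) · ∑_{u ∈ Γ} f(u)·θ(u⁻¹). If S_𝟙 ≠ 0, where 𝟙 ∈ Γ̂ is the trivial homomorphism, then (∑_{u ∈ Γ} f(u)·Z(u)) / (∑_{u ∈ Γ} Z(u)) = (∑_{θ ∈ Γ̂} f̂(θ)·S_θ) / S_𝟙. -/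

import Mathlib

open Finset in
private lemma dual_finite {Γ : Type*} [CommGroup Γ] [Fintype Γ] :
    Finite (Γ →* ℂˣ) := by
  let n := Fintype.card Γ
  have : Finite (rootsOfUnity n ℂ) := inferInstance
  refine Finite.of_injective
    (fun θ : Γ →* ℂˣ => fun u : Γ => (⟨θ u, by
      rw [mem_rootsOfUnity, ← map_pow, pow_card_eq_one, map_one]⟩ : rootsOfUnity n ℂ)) ?_
  intro θ₁ θ₂ h
  ext u
  have := congrFun h u
  simpa [Subtype.ext_iff, Units.ext_iff] using this

private lemma norm_dual_val {Γ : Type*} [CommGroup Γ] [Fintype Γ] (θ : Γ →* ℂˣ) (u : Γ) :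
    ‖(θ u : ℂ)‖ = 1 := by
  refine Complex.norm_eq_one_of_pow_eq_one (n := Fintype.card Γ) ?_ Fintype.card_ne_zero
  rw [← Units.val_pow_eq_pow_val, ← map_pow, pow_card_eq_one, map_one, Units.val_one]

open Finset in
private lemma ortho {Γ : Type*} [CommGroup Γ] [Fintype Γ] (θ : Γ →* ℂˣ) [Decidable (θ = 1)] :
    ∑ u : Γ, (θ u⁻¹ : ℂ) = if θ = 1 then (Fintype.card Γ : ℂ) else 0 := by
  have h1 : ∑ u : Γ, (θ u⁻¹ : ℂ) = ∑ u : Γ, (θ u : ℂ) :=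
    Fintype.sum_equiv (Equiv.inv Γ) _ _ (fun u => by simp)
  classical
  have h2 := sum_hom_units (R := ℂ) ((Units.coeHom ℂ).comp θ)
  have h3 : ((Units.coeHom ℂ).comp θ = 1) ↔ θ = 1 := by
    constructor
    · intro h
      ext u
      have h4 := congrArg (fun φ : Γ →* ℂ => φ u) h
      simp only [MonoidHom.coe_comp, Function.comp_apply, MonoidHom.one_apply,
        Units.coeHom_apply] at h4
      simpa using h4
    · rintro rfl
      ext u
      simp only [MonoidHom.coe_comp, Function.comp_apply, MonoidHom.one_apply,
        Units.coeHom_apply, Units.val_one]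
  simp only [MonoidHom.coe_comp, Function.comp_apply, Units.coeHom_apply, h3] at h2
  rw [h1, h2]
  split_ifs with h <;> simp

theorem expected_topological_type
    {Γ : Type*} [CommGroup Γ] [Fintype Γ]
    {I : Type*} (w : I → ℂ) (hw : Summable w)
    (lam : I → (Γ →* ℂˣ))
    (Z : Γ → ℂ)
    (hZ : ∀ u : Γ, Z u = ∑' μ : I, w μ * ((lam μ) u⁻¹ : ℂ))
    (S : (Γ →* ℂˣ) → ℂ)
    (hS : ∀ θ : Γ →* ℂˣ, S θ = ∑' μ : {μ : I // lam μ = θ}, w μ.val)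
    (f : Γ → ℂ)
    (fhat : (Γ →* ℂˣ) → ℂ)
    (hfhat : ∀ θ : Γ →* ℂˣ,
      fhat θ = (1 / (Fintype.card Γ : ℂ)) * ∑ u : Γ, f u * (θ u⁻¹ : ℂ))
    (hS1 : S 1 ≠ 0) :
    (∑ u : Γ, f u * Z u) / (∑ u : Γ, Z u) =
      (∑ᶠ θ : Γ →* ℂˣ, fhat θ * S θ) / S 1 := by
  classical
  have : Finite (Γ →* ℂˣ) := dual_finite
  have : Fintype (Γ →* ℂˣ) := Fintype.ofFinite _
  have hcard : (Fintype.card Γ : ℂ) ≠ 0 := Nat.cast_ne_zero.mpr Fintype.card_ne_zero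
  have hw' : Summable fun μ => ‖w μ‖ := summable_norm_iff.mpr hw
  -- general summability of w times a bounded factor
  have hsummul : ∀ (c : I → ℂ) (B : ℝ), (∀ μ, ‖c μ‖ ≤ B) →
      Summable fun μ => w μ * c μ := by
    intro c B hB
    refine Summable.of_norm_bounded (hw'.mul_right B) ?_
    intro μ
    rw [norm_mul]
    exact mul_le_mul_of_nonneg_left (hB μ) (norm_nonneg _)
  -- key identity : for any g, ∑' μ, w μ * g (lam μ) = ∑ θ, g θ * S θ
  have key : ∀ g : (Γ →* ℂˣ) → ℂ,
      ∑' μ : I, w μ * g (lam μ) = ∑ θ : Γ →* ℂˣ, g θ * S θ := by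
    intro g
    have hgB : ∀ μ, ‖g (lam μ)‖ ≤ ∑ θ : Γ →* ℂˣ, ‖g θ‖ := fun μ =>
      Finset.single_le_sum (f := fun θ => ‖g θ‖) (fun θ _ => norm_nonneg _)
        (Finset.mem_univ (lam μ))
    have hsum : Summable fun μ => w μ * g (lam μ) := hsummul _ _ hgB
    have hind : ∀ θ : Γ →* ℂˣ,
        Summable ({μ : I | lam μ = θ}.indicator fun μ => w μ * g (lam μ)) :=
      fun θ => hsum.indicator {μ : I | lam μ = θ}
    calc ∑' μ : I, w μ * g (lam μ)
        = ∑' μ : I, ∑ θ : Γ →* ℂˣ,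
            ({μ : I | lam μ = θ}.indicator fun μ => w μ * g (lam μ)) μ := by
          refine tsum_congr fun μ => ?_
          simp only [Set.indicator_apply, Set.mem_setOf_eq]
          rw [Finset.sum_ite_eq (Finset.univ) (lam μ)
            (fun _ => w μ * g (lam μ))]
          simp
      _ = ∑ θ : Γ →* ℂˣ, ∑' μ : I,
            ({μ : I | lam μ = θ}.indicator fun μ => w μ * g (lam μ)) μ :=
          Summable.tsum_finsetSum fun θ _ => hind θ
      _ = ∑ θ : Γ →* ℂˣ, g θ * S θ := by
          refine Finset.sum_congr rfl fun θ _ => ?_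
          rw [hS θ]
          have h1 : (∑' μ : {μ : I // lam μ = θ}, w μ.val)
              = ∑' μ : I, ({μ : I | lam μ = θ}.indicator w) μ := by
            rw [← tsum_subtype {μ : I | lam μ = θ} w]
            rfl
          rw [h1, ← tsum_mul_left]
          refine tsum_congr fun μ => ?_
          by_cases h : lam μ = θ
          · simp [Set.indicator_apply, Set.mem_setOf_eq, h]
            ring
          · simp [Set.indicator_apply, Set.mem_setOf_eq, h]
  -- individual summability
  have hslam : ∀ u : Γ, Summable fun μ => w μ * ((lam μ) u⁻¹ : ℂ) := by
    intro u
    exact hsummul _ 1 fun μ => le_of_eq (norm_dual_val _ _)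
  -- numerator
  have hnum : ∑ u : Γ, f u * Z u
      = (Fintype.card Γ : ℂ) * ∑ θ : Γ →* ℂˣ, fhat θ * S θ := by
    have h1 : ∑ u : Γ, f u * Z u
        = ∑' μ : I, ∑ u : Γ, f u * (w μ * ((lam μ) u⁻¹ : ℂ)) := by
      rw [Summable.tsum_finsetSum fun u _ => (hslam u).mul_left (f u)]
      refine Finset.sum_congr rfl fun u _ => ?_
      rw [hZ u, ← tsum_mul_left]
    rw [h1]
    have h2 : ∀ μ : I, ∑ u : Γ, f u * (w μ * ((lam μ) u⁻¹ : ℂ))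
        = w μ * ((Fintype.card Γ : ℂ) * fhat (lam μ)) := by
      intro μ
      have : ∑ u : Γ, f u * (w μ * ((lam μ) u⁻¹ : ℂ))
          = w μ * ∑ u : Γ, f u * ((lam μ) u⁻¹ : ℂ) := by
        rw [Finset.mul_sum]; refine Finset.sum_congr rfl fun u _ => by ring
      rw [this, hfhat (lam μ)]
      field_simp
    calc ∑' μ : I, ∑ u : Γ, f u * (w μ * ((lam μ) u⁻¹ : ℂ))
        = ∑' μ : I, w μ * ((Fintype.card Γ : ℂ) * fhat (lam μ)) :=
          tsum_congr h2
      _ = (Fintype.card Γ : ℂ) * ∑' μ : I, w μ * fhat (lam μ) := by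
          rw [← tsum_mul_left]; exact tsum_congr fun μ => by ring
      _ = (Fintype.card Γ : ℂ) * ∑ θ : Γ →* ℂˣ, fhat θ * S θ := by rw [key]
  -- denominator
  have hden : ∑ u : Γ, Z u = (Fintype.card Γ : ℂ) * S 1 := by
    have h1 : ∑ u : Γ, Z u
        = ∑' μ : I, ∑ u : Γ, w μ * ((lam μ) u⁻¹ : ℂ) := by
      rw [Summable.tsum_finsetSum fun u _ => hslam u]
      exact Finset.sum_congr rfl fun u _ => hZ u
    rw [h1]
    have h2 : ∀ μ : I, ∑ u : Γ, w μ * ((lam μ) u⁻¹ : ℂ)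
        = w μ * ((Fintype.card Γ : ℂ) *
            (if lam μ = 1 then (1 : ℂ) else 0)) := by
      intro μ
      rw [← Finset.mul_sum, ortho (lam μ)]
      by_cases h : lam μ = 1 <;> simp [h]
    calc ∑' μ : I, ∑ u : Γ, w μ * ((lam μ) u⁻¹ : ℂ)
        = ∑' μ : I, w μ * ((Fintype.card Γ : ℂ) *
            (if lam μ = 1 then (1 : ℂ) else 0)) := tsum_congr h2
      _ = (Fintype.card Γ : ℂ) *
            ∑' μ : I, w μ * (if lam μ = 1 then (1 : ℂ) else 0) := by
          rw [← tsum_mul_left]; exact tsum_congr fun μ => by ring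
      _ = (Fintype.card Γ : ℂ) *
            ∑ θ : Γ →* ℂˣ, (if θ = 1 then (1 : ℂ) else 0) * S θ := by
          rw [key (fun θ => if θ = 1 then (1 : ℂ) else 0)]
      _ = (Fintype.card Γ : ℂ) * S 1 := by
          congr 1
          rw [Finset.sum_eq_single 1] <;> simp +contextual
  rw [hnum, hden, mul_div_mul_left _ _ hcard, finsum_eq_sum_of_fintype]
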